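/- Let L = {x^a, y^b, z^c} with x < y < z and c < z - y. Then L has no z-growable realization: in any realization z-growable at m, each of the z - y vertices m-z+1, ..., m-y must be incident with a lengthened edge, and each lengthened edge incident with such a vertex must have length z, but there are only c < z-y edges of length z. -/

import Mathlib

def pathLen (v p q : ℕ) : ℕ := min (Nat.dist p q) (v - Nat.dist p q)

def lengths (v : ℕ) (h : List ℕ) : Multiset ℕ :=
  (List.zipWith (pathLen v) h h.tail : List ℕ)

def IsHamPath (v : ℕ) (h : List ℕ) : Prop :=
  h.Nodup ∧ h.length = v ∧ ∀ p ∈ h, p < v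

/-- The growth embedding at `m` with parameter `x`. -/
def gemb (m x p : ℕ) : ℕ := if p ≤ m then p else p + x

/-- The edge `e` of `K_v` has its length increased by the growth embedding. -/
def EdgeIncr (v x m : ℕ) (e : ℕ × ℕ) : Prop :=
  pathLen v e.1 e.2 < pathLen (v + x) (gemb m x e.1) (gemb m x e.2)

/-- The Hamiltonian path `h` is `x`-growable at `m`: each vertex `p` with
`m - x < p ≤ m` is incident with exactly one path-edge whose length is increased
by the growth embedding, and no other path-edge has its length increased. -/
def Growable (v x m : ℕ) (h : List ℕ) : Prop :=
  x ≤ m + 1 ∧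
  (∀ p : ℕ, m < p + x → p ≤ m →
    ((h.zip h.tail).countP fun e =>
      decide ((e.1 = p ∨ e.2 = p) ∧
        pathLen v e.1 e.2 < pathLen (v + x) (gemb m x e.1) (gemb m x e.2))) = 1) ∧
  ∀ e ∈ h.zip h.tail, EdgeIncr v x m e → ∃ p, m < p + x ∧ p ≤ m ∧ (e.1 = p ∨ e.2 = p)

lemma key4 (v y z m p q : ℕ) (hyz : y < z) (h2z : 2*z ≤ v) (hmv : m < v)
    (hpz : m < p + z) (hpy : p + y ≤ m) (hq : q < v) (hp : p < v)
    (hl : pathLen v p q ≤ y ∨ pathLen v p q = z)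
    (hincr : pathLen v p q < pathLen (v+z) (gemb m z p) (gemb m z q)) :
    pathLen v p q = z := by
  have hgp : gemb m z p = p := by simp [gemb]; omega
  by_cases hqm : q ≤ m
  · have hgq : gemb m z q = q := by simp [gemb]; omega
    rw [hgp, hgq] at hincr
    simp only [pathLen, Nat.dist] at *
    omega
  · have hgq : gemb m z q = q + z := by simp [gemb]; omega
    rw [hgp, hgq] at hincr
    simp only [pathLen, Nat.dist] at *
    omega

lemma pathLen_comm (v p q : ℕ) : pathLen v p q = pathLen v q p := by
  simp [pathLen, Nat.dist_comm]

theorem stmt_4 (x y z a b c v : ℕ) (hxy : x < y) (hyz : y < z) (hx : 0 < x)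
    (ha : 0 < a) (hb : 0 < b) (hc : 0 < c)
    (hv : v = a + b + c + 1) (hcz : c < z - y) :
    ¬ ∃ (h : List ℕ) (m : ℕ), IsHamPath v h ∧
      lengths v h = Multiset.replicate a x + Multiset.replicate b y + Multiset.replicate c z ∧
      Growable v z m h := by
  rintro ⟨h, m, ⟨hnd, hlen, hmem⟩, hL, hzm1, hone, -⟩
  set E := h.zip h.tail with hE
  -- lengths as a mapped list
  have hmaplist : lengths v h = ((E.map fun e => pathLen v e.1 e.2 : List ℕ) : Multiset ℕ) := by
    unfold lengths
    rw [← List.map_uncurry_zip_eq_zipWith]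
    rfl
  have hxz : ¬ (z = x) := by omega
  have hyzne : ¬ (z = y) := by omega
  -- count of z among edge lengths is c
  have hc' : Multiset.count z (lengths v h) = c := by
    rw [hL]; simp [Multiset.count_replicate, hxz, hyzne]; omega
  have hc2 : (E.map fun e => pathLen v e.1 e.2).count z = c := by
    have := hc'; rw [hmaplist] at this; simpa using this
  have hc3 : E.countP (fun e => pathLen v e.1 e.2 == z) = c := by
    rw [← hc2, List.count, List.countP_map]; rfl
  -- edge endpoints are vertices
  have hEv : ∀ e ∈ E, e.1 < v ∧ e.2 < v := by
    intro e he
    obtain ⟨h1, h2⟩ := List.of_mem_zip he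
    exact ⟨hmem _ h1, hmem _ (List.mem_of_mem_tail h2)⟩
  -- every edge length is x, y or z
  have hmemL : ∀ e ∈ E, pathLen v e.1 e.2 ≤ y ∨ pathLen v e.1 e.2 = z := by
    intro e he
    have : pathLen v e.1 e.2 ∈ lengths v h := by
      rw [hmaplist]
      exact Multiset.mem_coe.mpr (List.mem_map_of_mem he)
    rw [hL] at this
    simp only [Multiset.mem_add, Multiset.mem_replicate] at this
    omega
  -- there is an edge of length z, so 2z ≤ v
  have h2z : 2*z ≤ v := by
    have hzl : z ∈ lengths v h := by rw [hL]; simp [Multiset.mem_replicate]; omega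
    rw [hmaplist] at hzl
    obtain ⟨e, he, hez⟩ := List.mem_map.mp (Multiset.mem_coe.mp hzl)
    obtain ⟨h1, h2⟩ := hEv e he
    simp only [pathLen, Nat.dist] at hez
    omega
  have hz0 : 0 < z := by omega
  -- m < v
  have hmv : m < v := by
    have h1 := hone m (by omega) le_rfl
    obtain ⟨e, he, hpe⟩ := List.countP_pos_iff.mp (by rw [h1]; norm_num)
    simp only [decide_eq_true_eq] at hpe
    obtain ⟨h1, h2⟩ := hEv e he
    rcases hpe.1 with h' | h' <;> omega
  -- existence of a length-z lengthened edge at each p in the window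
  have hex : ∀ p ∈ Finset.Ico (m+1-z) (m+1-y), ∃ e, e ∈ E ∧ (e.1 = p ∨ e.2 = p) ∧
      pathLen v e.1 e.2 = z := by
    intro p hp
    rw [Finset.mem_Ico] at hp
    have hp1 : m < p + z := by omega
    have hp2 : p + y ≤ m := by omega
    have h1 := hone p hp1 (by omega)
    obtain ⟨e, he, hpe⟩ := List.countP_pos_iff.mp (by rw [h1]; norm_num)
    simp only [decide_eq_true_eq] at hpe
    obtain ⟨hep, hincr⟩ := hpe
    refine ⟨e, he, hep, ?_⟩
    obtain ⟨hv1, hv2⟩ := hEv e he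
    rcases hep with hep | hep
    · subst hep
      exact key4 v y z m e.1 e.2 hyz h2z hmv hp1 hp2 hv2 hv1 (hmemL e he) hincr
    · subst hep
      rw [pathLen_comm]
      rw [pathLen_comm] at hincr
      rw [pathLen_comm (v+z)] at hincr
      have hl' := hmemL e he
      rw [pathLen_comm] at hl'
      exact key4 v y z m e.2 e.1 hyz h2z hmv hp1 hp2 hv1 hv2 hl' hincr
  choose! f hf1 hf2 hf3 using hex
  -- target finset of length-z edges
  set T := (E.filter fun e => pathLen v e.1 e.2 == z).toFinset with hT
  have hTc : T.card ≤ c := by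
    calc T.card ≤ (E.filter fun e => pathLen v e.1 e.2 == z).length :=
          List.toFinset_card_le _
      _ = c := by rw [← List.countP_eq_length_filter]; exact hc3
  have hmaps : ∀ p ∈ Finset.Ico (m+1-z) (m+1-y), f p ∈ T := by
    intro p hp
    rw [hT, List.mem_toFinset, List.mem_filter]
    exact ⟨hf1 p hp, by simp [hf3 p hp]⟩
  have hinj : Set.InjOn f (Finset.Ico (m+1-z) (m+1-y)) := by
    intro p1 h1 p2 h2 hfe
    by_contra hne
    have e1 := hf2 p1 (by simpa using h1)
    have e2 := hf2 p2 (by simpa using h2)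
    have e3 := hf3 p1 (by simpa using h1)
    rw [hfe] at e1 e3
    simp only [Finset.coe_Ico, Set.mem_Ico] at h1 h2
    simp only [pathLen, Nat.dist] at e3
    rcases e1 with e1 | e1 <;> rcases e2 with e2 | e2 <;> omega
  have hcard := Finset.card_le_card_of_injOn f hmaps hinj
  rw [Nat.card_Ico] at hcard
  omega
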